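/- Let d ≥ 2 and {p_s}_{s∈S} ⊂ [0,1) be a finite collection. Consider the erasure channels E_{p_s}(x) := (1−p_s)x + p_s·tr(x)|e_{d+1}⟩⟨e_{d+1}| and the states ρ_1 = |e_1⟩⟨e_1|, ρ_2 = |e_2⟩⟨e_2| on ℂ^d. Then there exist no probability distributions r_1, r_2 on S with ∑_{s∈S} r_1(s) E_{p_s}(ρ_1) = ∑_{s∈S} r_2(s) E_{p_s}(ρ_2). In particular the AVQC {E_{p_s}}_{s∈S} is non-symmetrizable at block length 1 for the two-element set {ρ_1, ρ_2}. -/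

import Mathlib

/-- The embedding of `B(ℂᵈ)` into `B(ℂᵈ⁺¹)`. -/
def embedMat (d : ℕ) (x : Matrix (Fin d) (Fin d) ℂ) :
    Matrix (Fin (d + 1)) (Fin (d + 1)) ℂ :=
  Matrix.of fun i j =>
    if hi : (i : ℕ) < d then if hj : (j : ℕ) < d then x ⟨i, hi⟩ ⟨j, hj⟩ else 0 else 0

/-- The quantum erasure channel `E_p : B(ℂᵈ) → B(ℂᵈ⁺¹)`. -/
noncomputable def erasure (d : ℕ) (p : ℝ) (x : Matrix (Fin d) (Fin d) ℂ) :
    Matrix (Fin (d + 1)) (Fin (d + 1)) ℂ :=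
  (((1 - p : ℝ)) : ℂ) • embedMat d x +
    ((p : ℝ) : ℂ) • x.trace • Matrix.single (Fin.last d) (Fin.last d) 1

/-- for erasure probabilities `p_s ∈ [0,1)` and the states
`ρ₁ = |e₁⟩⟨e₁|`, `ρ₂ = |e₂⟩⟨e₂|`, there are no probability distributions `r₁, r₂`
on `S` with `∑_s r₁(s) E_{p_s}(ρ₁) = ∑_s r₂(s) E_{p_s}(ρ₂)`; i.e. the erasure AVQC
is non-symmetrizable at block length one for `{ρ₁, ρ₂}`. -/
theorem stmt_18 (d : ℕ) (hd : 2 ≤ d) {S : Type*} [Fintype S] [Nonempty S]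
    (p : S → ℝ) (hp : ∀ s, p s ∈ Set.Ico (0 : ℝ) 1)
    (r₁ r₂ : S → ℝ) (hr₁0 : ∀ s, 0 ≤ r₁ s) (hr₁1 : ∑ s, r₁ s = 1)
    (hr₂0 : ∀ s, 0 ≤ r₂ s) (hr₂1 : ∑ s, r₂ s = 1) :
    ∑ s, ((r₁ s : ℝ) : ℂ) •
        erasure d (p s) (Matrix.single (⟨0, by omega⟩ : Fin d)
          (⟨0, by omega⟩ : Fin d) 1) ≠
      ∑ s, ((r₂ s : ℝ) : ℂ) •
        erasure d (p s) (Matrix.single (⟨1, by omega⟩ : Fin d)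
          (⟨1, by omega⟩ : Fin d) 1) := by
  intro h
  have h00 := congrFun (congrFun h (⟨0, by omega⟩ : Fin (d+1))) (⟨0, by omega⟩ : Fin (d+1))
  have hd0 : (0:ℕ) < d := by omega
  have hdne : d ≠ 0 := by omega
  have hlast : ((⟨0, by omega⟩ : Fin (d+1)) : ℕ) ≠ ((Fin.last d : Fin (d+1)) : ℕ) := by
    simp [Fin.last]; omega
  simp only [Matrix.sum_apply, Matrix.smul_apply, erasure, embedMat, Matrix.add_apply,
    Matrix.of_apply, Matrix.smul_apply, smul_eq_mul, Matrix.single,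
    Fin.ne_of_val_ne hlast, hd0, dif_pos, if_false] at h00
  simp [hdne] at h00
  have hre : ∑ s : S, r₁ s * (1 - p s) = 0 := by
    have := congrArg Complex.re h00
    push_cast at this
    simpa using this
  have hpos : 0 < ∑ s : S, r₁ s * (1 - p s) := by
    obtain ⟨s, hs⟩ : ∃ s, r₁ s ≠ 0 := by
      by_contra hc
      push_neg at hc
      simp [hc] at hr₁1
    refine Finset.sum_pos' (fun i _ => mul_nonneg (hr₁0 i) (by linarith [(hp i).2])) 
      ⟨s, Finset.mem_univ s, ?_⟩
    have h1 := (hp s).2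
    have h2 := lt_of_le_of_ne (hr₁0 s) (Ne.symm hs)
    exact mul_pos h2 (by linarith)
  linarith
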